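/- arXiv:2211.03166 — 2 statements merged into one kernel-verified Lean document; each statement's English description precedes it below -/
import Mathlib

section
/- Let q = p^α, where p is an odd prime and α ≥ 1 is an integer, and let A, B, C, D, E be complex-valued Dirichlet characters mod q. Then for every x ∈ ℤ/qℤ: ₃F₂(A,B,C;D,E|x) = (ε(x)·(B·C·D·E)(−1)/q²)·Σ_{y,z ∈ ℤ/qℤ} C(y)·(C̄E)(1−y)·B(z)·(B̄D)(1−z)·Ā(1−xyz), where ε is the trivial character mod q. -/
open Finset

/-- The complex-conjugate Dirichlet character. -/
noncomputable def conjChar {q : ℕ} (A : DirichletCharacter ℂ q) : DirichletCharacter ℂ q :=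
  A.ringHomComp (starRingEnd ℂ)

/-- The binomial coefficient `binom(A,B) = B(-1)/q * J(A, B̄)` for Dirichlet characters. -/
noncomputable def dBinom {q : ℕ} [NeZero q] (A B : DirichletCharacter ℂ q) : ℂ :=
  B (-1) / q * jacobiSum A (conjChar B)

/-- The hypergeometric function `₃F₂` for Dirichlet characters. -/
noncomputable def threeF₂ {q : ℕ} [NeZero q] (A B C D E : DirichletCharacter ℂ q)
    (x : ZMod q) : ℂ :=
  (q / (Nat.totient q : ℂ)) *
    ∑ᶠ χ : DirichletCharacter ℂ q,
      dBinom (A * χ) χ * dBinom (B * χ) (D * χ) * dBinom (C * χ) (E * χ) * χ x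

set_option linter.unusedSectionVars false

variable {q : ℕ} [NeZero q]

lemma conjChar_eq_inv (A : DirichletCharacter ℂ q) : conjChar A = A⁻¹ :=
  MulChar.star_eq_inv A

lemma mul_inv_apply (A : DirichletCharacter ℂ q) {a : ZMod q} (ha : IsUnit a) :
    A a * A⁻¹ a = 1 := by
  rw [← MulChar.mul_apply, mul_inv_cancel, MulChar.one_apply ha]

lemma inv_apply_apply (A : DirichletCharacter ℂ q) (a : ZMod q) :
    A (Ring.inverse a) = A⁻¹ a := (MulChar.inv_apply A a).symm

lemma inv_inv_apply (A : DirichletCharacter ℂ q) (a : ZMod q) :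
    A⁻¹ (Ring.inverse a) = A a := by rw [inv_apply_apply, inv_inv]

lemma neg_one_mul_self (A : DirichletCharacter ℂ q) : A (-1) * A (-1) = 1 := by
  rw [← map_mul]; norm_num

lemma neg_one_cases (A : DirichletCharacter ℂ q) : A (-1) = 1 ∨ A (-1) = -1 :=
  mul_self_eq_one_iff.mp (neg_one_mul_self A)

lemma char_inv_neg_one (A : DirichletCharacter ℂ q) : A⁻¹ (-1) = A (-1) := by
  have h1 := mul_inv_apply A (IsUnit.neg isUnit_one)
  exact mul_left_cancel₀ (left_ne_zero_of_mul_eq_one h1) (h1.trans (neg_one_mul_self A).symm)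

lemma ring_inverse_inverse {a : ZMod q} (ha : IsUnit a) :
    Ring.inverse (Ring.inverse a) = a := by
  obtain ⟨u, rfl⟩ := ha
  rw [Ring.inverse_unit, Ring.inverse_unit, inv_inv]

lemma key_ring {t : ZMod q} (ht1 : IsUnit (1 - t)) :
    1 - -(t * Ring.inverse (1 - t)) = Ring.inverse (1 - t) := by
  have h : (1 - t) * Ring.inverse (1 - t) = 1 := Ring.mul_inverse_cancel _ ht1
  linear_combination -h

lemma term_key (B D χ : DirichletCharacter ℂ q) {t : ZMod q} (ht : IsUnit t)
    (ht1 : IsUnit (1 - t)) :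
    B (-1) * χ (-1) * (B t * B⁻¹ (1 - t) * D (1 - t) * χ t) =
      (B * χ) (-(t * Ring.inverse (1 - t))) *
        (D⁻¹ * χ⁻¹) (1 - -(t * Ring.inverse (1 - t))) := by
  rw [key_ring ht1]
  have h1 : (-(t * Ring.inverse (1 - t)) : ZMod q) = (-1) * t * Ring.inverse (1 - t) := by ring
  rw [h1]
  simp only [MulChar.mul_apply, map_mul]
  rw [inv_apply_apply B (1 - t), inv_apply_apply χ (1 - t), inv_inv_apply D (1 - t),
    inv_inv_apply χ (1 - t)]
  have hc : χ (1 - t) * χ⁻¹ (1 - t) = 1 := mul_inv_apply χ ht1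
  linear_combination (-(B (-1) * B t * B⁻¹ (1 - t) * χ (-1) * χ t * D (1 - t))) * hc

lemma binom_expand (B D χ : DirichletCharacter ℂ q) :
    dBinom (B * χ) (D * χ) =
      (B (-1) * D (-1) / q) * ∑ t : ZMod q, B t * B⁻¹ (1 - t) * D (1 - t) * χ t := by
  rw [dBinom, jacobiSum, conjChar_eq_inv, mul_inv]
  have hS : B (-1) * χ (-1) * ∑ t : ZMod q, B t * B⁻¹ (1 - t) * D (1 - t) * χ t
      = ∑ z : ZMod q, (B * χ) z * (D⁻¹ * χ⁻¹) (1 - z) := by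
    rw [Finset.mul_sum]
    rw [← Finset.sum_filter_of_ne (s := univ) (p := fun a : ZMod q => IsUnit a ∧ IsUnit (1 - a))
      (f := fun t => B (-1) * χ (-1) * (B t * B⁻¹ (1 - t) * D (1 - t) * χ t)) ?_,
      ← Finset.sum_filter_of_ne (s := univ) (p := fun a : ZMod q => IsUnit a ∧ IsUnit (1 - a))
      (f := fun z => (B * χ) z * (D⁻¹ * χ⁻¹) (1 - z)) ?_]
    · refine Finset.sum_nbij' (fun t => -(t * Ring.inverse (1 - t)))
        (fun t => -(t * Ring.inverse (1 - t))) ?_ ?_ ?_ ?_ ?_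
      · intro a ha
        simp only [mem_filter, mem_univ, true_and] at ha ⊢
        refine ⟨(ha.1.mul (isUnit_ringInverse.mpr ha.2)).neg, ?_⟩
        rw [key_ring ha.2]
        exact isUnit_ringInverse.mpr ha.2
      · intro a ha
        simp only [mem_filter, mem_univ, true_and] at ha ⊢
        refine ⟨(ha.1.mul (isUnit_ringInverse.mpr ha.2)).neg, ?_⟩
        rw [key_ring ha.2]
        exact isUnit_ringInverse.mpr ha.2
      · intro a ha
        simp only [mem_filter, mem_univ, true_and] at ha
        have h1 : 1 - -(a * Ring.inverse (1 - a)) = Ring.inverse (1 - a) := key_ring ha.2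
        beta_reduce
        rw [h1, ring_inverse_inverse ha.2]
        have h : (1 - a) * Ring.inverse (1 - a) = 1 := Ring.mul_inverse_cancel _ ha.2
        linear_combination a * h
      · intro a ha
        simp only [mem_filter, mem_univ, true_and] at ha
        have h1 : 1 - -(a * Ring.inverse (1 - a)) = Ring.inverse (1 - a) := key_ring ha.2
        beta_reduce
        rw [h1, ring_inverse_inverse ha.2]
        have h : (1 - a) * Ring.inverse (1 - a) = 1 := Ring.mul_inverse_cancel _ ha.2
        linear_combination a * h
      · intro a ha
        simp only [mem_filter, mem_univ, true_and] at ha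
        exact term_key B D χ ha.1 ha.2
    · intro z _ hz
      by_contra hcon
      rw [not_and_or] at hcon
      rcases hcon with h | h
      · refine hz ?_
        beta_reduce
        rw [MulChar.mul_apply, B.map_nonunit h, zero_mul, zero_mul]
      · refine hz ?_
        beta_reduce
        rw [MulChar.mul_apply (D⁻¹), MulChar.map_nonunit D⁻¹ h, zero_mul, mul_zero]
    · intro t _ ht
      by_contra hcon
      rw [not_and_or] at hcon
      rcases hcon with h | h
      · refine ht ?_
        beta_reduce
        simp [χ.map_nonunit h]
      · refine ht ?_
        beta_reduce
        simp [MulChar.map_nonunit B⁻¹ h]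
  rw [← hS, MulChar.mul_apply]
  rcases neg_one_cases χ with h | h <;> rw [h] <;> ring

lemma binom_expand_one (A χ : DirichletCharacter ℂ q) :
    dBinom (A * χ) χ = (A (-1) / q) * ∑ t : ZMod q, A t * A⁻¹ (1 - t) * χ t := by
  have h := binom_expand A 1 χ
  rw [one_mul] at h
  rw [h, MulChar.one_apply (IsUnit.neg isUnit_one), mul_one]
  congr 1
  refine Finset.sum_congr rfl fun t _ => ?_
  by_cases h1 : IsUnit (1 - t)
  · rw [MulChar.one_apply h1, mul_one]
  · simp [MulChar.map_nonunit A⁻¹ h1]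

lemma innerTSum (A : DirichletCharacter ℂ q) (x : ZMod q) {y z : ZMod q}
    (hy : IsUnit y) (hz : IsUnit z) :
    ∑ t : ZMod q, (A t * A⁻¹ (1 - t)) * (if t * z * y * x = 1 then (1:ℂ) else 0)
      = A (-1) * ((1 : DirichletCharacter ℂ q) x * A⁻¹ (1 - x * y * z)) := by
  by_cases hx : IsUnit x
  · have hw : IsUnit (x * y * z) := (hx.mul hy).mul hz
    have hwv : (x * y * z) * Ring.inverse (x * y * z) = 1 := Ring.mul_inverse_cancel _ hw
    have hcond : ∀ t : ZMod q, (t * z * y * x = 1) ↔ (t = Ring.inverse (x * y * z)) := by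
      intro t
      constructor
      · intro h
        have h2 : t * (x * y * z) = 1 := by linear_combination h
        calc t = t * ((x * y * z) * Ring.inverse (x * y * z)) := by rw [hwv, mul_one]
        _ = Ring.inverse (x * y * z) := by rw [← mul_assoc, h2, one_mul]
      · rintro rfl
        linear_combination hwv
    simp only [hcond, mul_ite, mul_one, mul_zero]
    rw [Finset.sum_ite_eq' univ (Ring.inverse (x * y * z))
      (fun t => A t * A⁻¹ (1 - t)), if_pos (mem_univ _)]
    have e1 : A (Ring.inverse (x * y * z)) = A⁻¹ (x * y * z) := inv_apply_apply A _
    have e2 : (1 : ZMod q) - Ring.inverse (x * y * z)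
        = (-1) * ((1 - (x * y * z)) * Ring.inverse (x * y * z)) := by linear_combination -hwv
    have e3 : A⁻¹ ((-1 : ZMod q) * ((1 - x * y * z) * Ring.inverse (x * y * z)))
        = A⁻¹ (-1) * (A⁻¹ (1 - x * y * z) * A⁻¹ (Ring.inverse (x * y * z))) := by
      rw [map_mul, map_mul]
    rw [e1, e2, e3, char_inv_neg_one, inv_inv_apply, MulChar.one_apply hx]
    linear_combination (A (-1) * A⁻¹ (1 - x * y * z)) * (mul_inv_apply A hw)
  · rw [MulChar.map_nonunit _ hx, zero_mul, mul_zero]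
    refine Finset.sum_eq_zero fun t _ => ?_
    rw [if_neg, mul_zero]
    intro h
    exact hx (IsUnit.of_mul_eq_one (a := x) (t * z * y) (by linear_combination h))

lemma yz_key (A B C D E : DirichletCharacter ℂ q) (x y z : ZMod q) :
    ∑ t : ZMod q, (A t * A⁻¹ (1 - t)) * (B z * B⁻¹ (1 - z) * D (1 - z)) *
        (C y * C⁻¹ (1 - y) * E (1 - y)) * (if t * z * y * x = 1 then (q.totient : ℂ) else 0)
      = ((q.totient : ℂ) * (A (-1) * (1 : DirichletCharacter ℂ q) x)) *
          ((B z * B⁻¹ (1 - z) * D (1 - z)) * (C y * C⁻¹ (1 - y) * E (1 - y)) *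
            A⁻¹ (1 - x * y * z)) := by
  by_cases hyz : IsUnit y ∧ IsUnit z
  · have hinner := innerTSum A x hyz.1 hyz.2
    have e : ∑ t : ZMod q, (A t * A⁻¹ (1 - t)) * (B z * B⁻¹ (1 - z) * D (1 - z)) *
        (C y * C⁻¹ (1 - y) * E (1 - y)) * (if t * z * y * x = 1 then (q.totient : ℂ) else 0)
        = ((B z * B⁻¹ (1 - z) * D (1 - z)) * (C y * C⁻¹ (1 - y) * E (1 - y)) * (q.totient : ℂ)) *
          ∑ t : ZMod q, (A t * A⁻¹ (1 - t)) * (if t * z * y * x = 1 then (1:ℂ) else 0) := by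
      rw [Finset.mul_sum]
      refine Finset.sum_congr rfl fun t _ => ?_
      by_cases h : t * z * y * x = 1 <;> simp only [h, if_pos, if_true, if_neg, if_false] <;> ring
    rw [e, hinner]
    ring
  · rcases not_and_or.mp hyz with h | h
    · have h0 : C y * C⁻¹ (1 - y) * E (1 - y) = 0 := by rw [C.map_nonunit h, zero_mul, zero_mul]
      rw [h0]
      simp
    · have h0 : B z * B⁻¹ (1 - z) * D (1 - z) = 0 := by rw [B.map_nonunit h, zero_mul, zero_mul]
      rw [h0]
      simp

theorem threeF₂_double_sum (p α : ℕ) (hp : p.Prime) (hodd : Odd p) (hα : 1 ≤ α)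
    (q : ℕ) (hq : q = p ^ α) [NeZero q] (A B C D E : DirichletCharacter ℂ q) :
    ∀ x : ZMod q,
      threeF₂ A B C D E x =
        ((1 : DirichletCharacter ℂ q) x * (B * C * D * E) (-1) / (q : ℂ) ^ 2) *
          ∑ y : ZMod q, ∑ z : ZMod q,
            C y * (conjChar C * E) (1 - y) * B z * (conjChar B * D) (1 - z) *
              conjChar A (1 - x * y * z) := by
  intro x
  have hQ : (q : ℂ) ≠ 0 := Nat.cast_ne_zero.mpr (NeZero.ne q)
  have hΦ : ((q.totient : ℂ)) ≠ 0 := by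
    refine Nat.cast_ne_zero.mpr ?_
    exact (Nat.totient_pos.mpr (Nat.pos_of_ne_zero (NeZero.ne q))).ne'
  rw [threeF₂, finsum_eq_sum_of_fintype]
  have step1 : ∀ χ : DirichletCharacter ℂ q,
      dBinom (A * χ) χ * dBinom (B * χ) (D * χ) * dBinom (C * χ) (E * χ) * χ x
        = (A (-1) * (B (-1) * D (-1)) * (C (-1) * E (-1)) / (q : ℂ) ^ 3) *
          ∑ y : ZMod q, ∑ z : ZMod q, ∑ t : ZMod q,
            (A t * A⁻¹ (1 - t)) * (B z * B⁻¹ (1 - z) * D (1 - z)) *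
              (C y * C⁻¹ (1 - y) * E (1 - y)) * χ (t * z * y * x) := by
    intro χ
    rw [binom_expand_one A χ, binom_expand B D χ, binom_expand C E χ]
    simp only [Finset.sum_mul, Finset.mul_sum]
    refine Finset.sum_congr rfl fun y _ => Finset.sum_congr rfl fun z _ =>
      Finset.sum_congr rfl fun t _ => ?_
    rw [map_mul χ, map_mul χ, map_mul χ]
    ring
  rw [Finset.sum_congr rfl fun χ _ => step1 χ, ← Finset.mul_sum]
  have step3 : ∑ χ : DirichletCharacter ℂ q, ∑ y : ZMod q, ∑ z : ZMod q, ∑ t : ZMod q,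
        (A t * A⁻¹ (1 - t)) * (B z * B⁻¹ (1 - z) * D (1 - z)) *
          (C y * C⁻¹ (1 - y) * E (1 - y)) * χ (t * z * y * x)
      = ∑ y : ZMod q, ∑ z : ZMod q, ∑ t : ZMod q,
        (A t * A⁻¹ (1 - t)) * (B z * B⁻¹ (1 - z) * D (1 - z)) *
          (C y * C⁻¹ (1 - y) * E (1 - y)) *
            (if t * z * y * x = 1 then (q.totient : ℂ) else 0) := by
    rw [Finset.sum_comm]
    refine Finset.sum_congr rfl fun y _ => ?_
    rw [Finset.sum_comm]
    refine Finset.sum_congr rfl fun z _ => ?_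
    rw [Finset.sum_comm]
    refine Finset.sum_congr rfl fun t _ => ?_
    rw [← Finset.mul_sum, DirichletCharacter.sum_characters_eq]
  rw [step3]
  rw [Finset.sum_congr rfl fun y _ => Finset.sum_congr rfl fun z _ => yz_key A B C D E x y z]
  simp only [← Finset.mul_sum]
  have hR : ∑ y : ZMod q, ∑ z : ZMod q,
        C y * (conjChar C * E) (1 - y) * B z * (conjChar B * D) (1 - z) *
          conjChar A (1 - x * y * z)
      = ∑ y : ZMod q, ∑ z : ZMod q,
        (B z * B⁻¹ (1 - z) * D (1 - z)) * (C y * C⁻¹ (1 - y) * E (1 - y)) *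
          A⁻¹ (1 - x * y * z) := by
    refine Finset.sum_congr rfl fun y _ => Finset.sum_congr rfl fun z _ => ?_
    rw [conjChar_eq_inv, conjChar_eq_inv, conjChar_eq_inv, MulChar.mul_apply, MulChar.mul_apply]
    ring
  rw [hR, MulChar.mul_apply, MulChar.mul_apply, MulChar.mul_apply]
  rcases neg_one_cases A with h | h <;> rw [h] <;> field_simp <;> ring
end

section
/- Let q = p^α, where p is an odd prime and α ≥ 1 is an integer, and let A, B, C, D, E be complex-valued Dirichlet characters mod q. Then for every x ∈ ℤ/qℤ: ₃F₂(A,B,C;D,E|x) = (ε(x)·(B·D)(−1)/q²)·Σ_{y,z ∈ ℤ/qℤ} (A·Ē)(y)·(C̄E)(1−y)·B(z)·(B̄D)(1−z)·Ā(y−xz), where ε is the trivial character mod q. -/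
open Finset

lemma conjChar_apply {q : ℕ} (A : DirichletCharacter ℂ q) (t : ZMod q) :
    conjChar A t = (starRingEnd ℂ) (A t) := rfl

lemma mul_apply' {q : ℕ} (A B : DirichletCharacter ℂ q) (t : ZMod q) :
    (A * B) t = A t * B t := by rw [MulChar.coeToFun_mul, Pi.mul_apply]

lemma conjChar_mul_apply {q : ℕ} (A B : DirichletCharacter ℂ q) (t : ZMod q) :
    conjChar (A * B) t = conjChar A t * conjChar B t := by
  simp [conjChar_apply, mul_apply', map_mul]

lemma conjChar_conjChar {q : ℕ} (A : DirichletCharacter ℂ q) :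
    conjChar (conjChar A) = A := by
  ext t; simp [conjChar_apply, conjChar, MulChar.ringHomComp_apply]

lemma apply_mul_conj {q : ℕ} [NeZero q] (A : DirichletCharacter ℂ q) {t : ZMod q}
    (ht : IsUnit t) : A t * conjChar A t = 1 := by
  rw [conjChar_apply]
  have hcard : Fintype.card (ZMod q)ˣ ≠ 0 := Fintype.card_ne_zero
  have hpow : (A t) ^ Fintype.card (ZMod q)ˣ = 1 := by
    rw [← map_pow]
    have ht2 : t ^ Fintype.card (ZMod q)ˣ = 1 := by
      have h1 : ht.unit ^ Fintype.card (ZMod q)ˣ = 1 := pow_card_eq_one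
      calc t ^ Fintype.card (ZMod q)ˣ
          = ((ht.unit ^ Fintype.card (ZMod q)ˣ : (ZMod q)ˣ) : ZMod q) := by
            rw [Units.val_pow_eq_pow_val, IsUnit.unit_spec]
        _ = 1 := by rw [h1]; rfl
    rw [ht2, map_one]
  have hn : ‖A t‖ = 1 := Complex.norm_eq_one_of_pow_eq_one hpow hcard
  have hn2 : Complex.normSq (A t) = 1 := by
    rw [Complex.normSq_eq_norm_sq, hn]; norm_num
  rw [Complex.mul_conj, hn2]; norm_num

lemma apply_ne_zero {q : ℕ} [NeZero q] (A : DirichletCharacter ℂ q) {t : ZMod q}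
    (ht : IsUnit t) : A t ≠ 0 :=
  fun h => one_ne_zero (α := ℂ)
    (by have := apply_mul_conj A ht; rw [h, zero_mul] at this; exact this.symm)

lemma apply_inv {q : ℕ} [NeZero q] (A : DirichletCharacter ℂ q) {t : ZMod q}
    (ht : IsUnit t) : A t⁻¹ = conjChar A t := by
  have h1 : A t * A t⁻¹ = 1 := by rw [← map_mul, ZMod.mul_inv_of_unit t ht, map_one]
  have h2 := apply_mul_conj A ht
  exact mul_left_cancel₀ (apply_ne_zero A ht) (h1.trans h2.symm)

lemma conj_apply_inv {q : ℕ} [NeZero q] (A : DirichletCharacter ℂ q) {t : ZMod q}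
    (ht : IsUnit t) : conjChar A t⁻¹ = A t := by
  rw [apply_inv (conjChar A) ht, conjChar_conjChar]

lemma conj_neg_one {q : ℕ} [NeZero q] (A : DirichletCharacter ℂ q) :
    conjChar A (-1) = A (-1) := by
  have h : A (-1) * A (-1) = 1 := by rw [← map_mul]; norm_num
  rcases mul_self_eq_one_iff.mp h with h1 | h1 <;> rw [conjChar_apply, h1] <;> simp

lemma zinv_unit {q : ℕ} {a : ZMod q} (ha : IsUnit a) : IsUnit (a⁻¹) :=
  IsUnit.of_mul_eq_one _ (ZMod.inv_mul_of_unit a ha)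

lemma zinv_inv {q : ℕ} {a : ZMod q} (ha : IsUnit a) : (a⁻¹)⁻¹ = a :=
  ZMod.inv_eq_of_mul_eq_one q a⁻¹ a (ZMod.inv_mul_of_unit a ha)

lemma orth {q : ℕ} [NeZero q] (a b : ZMod q) :
    ∑ χ : DirichletCharacter ℂ q, χ a * conjChar χ b
      = if a = b ∧ IsUnit b then (q.totient : ℂ) else 0 := by
  by_cases hb : IsUnit b
  · have h : ∀ χ : DirichletCharacter ℂ q, χ a * conjChar χ b = χ b⁻¹ * χ a := by
      intro χ; rw [← apply_inv χ hb]; ring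
    simp_rw [h]
    rw [DirichletCharacter.sum_char_inv_mul_char_eq ℂ hb a]
    by_cases hab : a = b
    · simp [hab, hb]
    · simp [hab, Ne.symm hab]
  · have h : ∀ χ : DirichletCharacter ℂ q, conjChar χ b = 0 := by
      intro χ; rw [conjChar_apply, χ.map_nonunit hb, map_zero]
    simp [h, hb]

section Main
variable {q : ℕ} [NeZero q] (A B C D E : DirichletCharacter ℂ q) (x : ZMod q)

lemma term_eq (χ : DirichletCharacter ℂ q) :
    dBinom (A * χ) χ * dBinom (B * χ) (D * χ) * dBinom (C * χ) (E * χ) * χ x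
      = (D (-1) * E (-1) / (q : ℂ) ^ 3) *
        ∑ u : ZMod q, ∑ v : ZMod q, ∑ w : ZMod q,
          (A u * B v * C w * conjChar D (1 - v) * conjChar E (1 - w)) *
            (χ (-(u * v * w * x)) * conjChar χ ((1 - u) * ((1 - v) * (1 - w)))) := by
  have hQ : (q : ℂ) ≠ 0 := Nat.cast_ne_zero.mpr (NeZero.ne q)
  have hχ2 : χ (-1) * χ (-1) = 1 := by
    rw [← map_mul]; norm_num
  have hsum : ∀ u v w : ZMod q,
      (A u * B v * C w * conjChar D (1 - v) * conjChar E (1 - w)) *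
        (χ (-(u * v * w * x)) * conjChar χ ((1 - u) * ((1 - v) * (1 - w))))
      = (χ (-1) * χ x) * ((A u * χ u * conjChar χ (1 - u)) *
          (((B v * χ v) * (conjChar D (1 - v) * conjChar χ (1 - v))) *
           ((C w * χ w) * (conjChar E (1 - w) * conjChar χ (1 - w))))) := by
    intro u v w
    have h1 : -(u * v * w * x) = (-1) * (u * (v * (w * x))) := by ring
    rw [h1, map_mul, map_mul, map_mul, map_mul, map_mul, map_mul]
    ring
  have hL : dBinom (A * χ) χ * dBinom (B * χ) (D * χ) * dBinom (C * χ) (E * χ) * χ x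
      = (D (-1) * E (-1) / (q : ℂ) ^ 3) * ((χ (-1) * χ x) *
          ((∑ u : ZMod q, A u * χ u * conjChar χ (1 - u)) *
           ((∑ v : ZMod q, (B v * χ v) * (conjChar D (1 - v) * conjChar χ (1 - v))) *
            (∑ w : ZMod q, (C w * χ w) * (conjChar E (1 - w) * conjChar χ (1 - w)))))) := by
    simp only [dBinom, jacobiSum, mul_apply', conjChar_mul_apply]
    linear_combination ((χ (-1)) * χ x * D (-1) * E (-1) *
      (∑ u : ZMod q, A u * χ u * conjChar χ (1 - u)) *
      (∑ v : ZMod q, (B v * χ v) * (conjChar D (1 - v) * conjChar χ (1 - v))) *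
      (∑ w : ZMod q, (C w * χ w) * (conjChar E (1 - w) * conjChar χ (1 - w))) / (q:ℂ)^3) * hχ2
  rw [hL]
  congr 1
  rw [Finset.sum_mul_sum, Finset.sum_mul_sum]
  simp only [Finset.mul_sum]
  refine Finset.sum_congr rfl fun u _ => Finset.sum_congr rfl fun v _ =>
    Finset.sum_congr rfl fun w _ => ?_
  rw [hsum u v w]

lemma stage1 : threeF₂ A B C D E x
    = (D (-1) * E (-1) / (q : ℂ) ^ 2) *
      ∑ u : ZMod q, ∑ v : ZMod q, ∑ w : ZMod q,
        (A u * B v * C w * conjChar D (1 - v) * conjChar E (1 - w)) *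
          (if -(u * v * w * x) = (1 - u) * ((1 - v) * (1 - w)) ∧
              IsUnit ((1 - u) * ((1 - v) * (1 - w))) then 1 else 0) := by
  have hQ : (q : ℂ) ≠ 0 := Nat.cast_ne_zero.mpr (NeZero.ne q)
  have hΦ : ((q.totient : ℂ)) ≠ 0 :=
    Nat.cast_ne_zero.mpr (Nat.totient_pos.mpr (Nat.pos_of_ne_zero (NeZero.ne q))).ne'
  rw [threeF₂, finsum_eq_sum_of_fintype]
  simp only [term_eq A B C D E x]
  rw [← Finset.mul_sum]
  have hswap : ∑ χ : DirichletCharacter ℂ q, ∑ u : ZMod q, ∑ v : ZMod q, ∑ w : ZMod q,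
        (A u * B v * C w * conjChar D (1 - v) * conjChar E (1 - w)) *
          (χ (-(u * v * w * x)) * conjChar χ ((1 - u) * ((1 - v) * (1 - w))))
      = ∑ u : ZMod q, ∑ v : ZMod q, ∑ w : ZMod q,
        (A u * B v * C w * conjChar D (1 - v) * conjChar E (1 - w)) *
          (if -(u * v * w * x) = (1 - u) * ((1 - v) * (1 - w)) ∧
              IsUnit ((1 - u) * ((1 - v) * (1 - w))) then (q.totient : ℂ) else 0) := by
    rw [Finset.sum_comm]
    refine Finset.sum_congr rfl fun u _ => ?_
    rw [Finset.sum_comm]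
    refine Finset.sum_congr rfl fun v _ => ?_
    rw [Finset.sum_comm]
    refine Finset.sum_congr rfl fun w _ => ?_
    rw [← Finset.mul_sum, orth]
  rw [hswap]
  have hpull : ∀ u v w : ZMod q,
      (A u * B v * C w * conjChar D (1 - v) * conjChar E (1 - w)) *
          (if -(u * v * w * x) = (1 - u) * ((1 - v) * (1 - w)) ∧
              IsUnit ((1 - u) * ((1 - v) * (1 - w))) then (q.totient : ℂ) else 0)
      = (q.totient : ℂ) * ((A u * B v * C w * conjChar D (1 - v) * conjChar E (1 - w)) *
          (if -(u * v * w * x) = (1 - u) * ((1 - v) * (1 - w)) ∧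
              IsUnit ((1 - u) * ((1 - v) * (1 - w))) then 1 else 0)) := by
    intro u v w; split_ifs <;> ring
  simp only [hpull, ← Finset.mul_sum]
  field_simp

lemma bij (hx : IsUnit x) :
    (∑ y : ZMod q, ∑ z : ZMod q, B (-1) * E (-1) *
        ((A * conjChar E) y * (conjChar C * E) (1 - y) * B z * (conjChar B * D) (1 - z) *
          conjChar A (y - x * z)))
    = ∑ u : ZMod q, ∑ v : ZMod q, ∑ w : ZMod q,
        (A u * B v * C w * conjChar D (1 - v) * conjChar E (1 - w)) *
          (if -(u * v * w * x) = (1 - u) * ((1 - v) * (1 - w)) ∧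
              IsUnit ((1 - u) * ((1 - v) * (1 - w))) then 1 else 0) := by
  classical
  set G : ZMod q × ZMod q → ℂ := fun r => B (-1) * E (-1) *
      ((A * conjChar E) r.1 * (conjChar C * E) (1 - r.1) * B r.2 * (conjChar B * D) (1 - r.2) *
        conjChar A (r.1 - x * r.2)) with hGdef
  set F : ZMod q × ZMod q × ZMod q → ℂ := fun p =>
      (A p.1 * B p.2.1 * C p.2.2 * conjChar D (1 - p.2.1) * conjChar E (1 - p.2.2)) *
        (if -(p.1 * p.2.1 * p.2.2 * x) = (1 - p.1) * ((1 - p.2.1) * (1 - p.2.2)) ∧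
            IsUnit ((1 - p.1) * ((1 - p.2.1) * (1 - p.2.2))) then 1 else 0) with hFdef
  have e1 : (∑ y : ZMod q, ∑ z : ZMod q, B (-1) * E (-1) *
        ((A * conjChar E) y * (conjChar C * E) (1 - y) * B z * (conjChar B * D) (1 - z) *
          conjChar A (y - x * z))) = ∑ r : ZMod q × ZMod q, G r := by
    rw [Fintype.sum_prod_type]
  have e2 : (∑ u : ZMod q, ∑ v : ZMod q, ∑ w : ZMod q,
        (A u * B v * C w * conjChar D (1 - v) * conjChar E (1 - w)) *
          (if -(u * v * w * x) = (1 - u) * ((1 - v) * (1 - w)) ∧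
              IsUnit ((1 - u) * ((1 - v) * (1 - w))) then 1 else 0))
      = ∑ p : ZMod q × ZMod q × ZMod q, F p := by
    rw [Fintype.sum_prod_type]
    refine Finset.sum_congr rfl fun u _ => ?_
    rw [Fintype.sum_prod_type]
  rw [e1, e2]
  set P : ZMod q × ZMod q → Prop := fun r =>
    IsUnit r.1 ∧ IsUnit (1 - r.1) ∧ IsUnit r.2 ∧ IsUnit (1 - r.2) ∧ IsUnit (r.1 - x * r.2)
    with hPdef
  set Q : ZMod q × ZMod q × ZMod q → Prop := fun p =>
    IsUnit p.1 ∧ IsUnit p.2.1 ∧ IsUnit p.2.2 ∧ IsUnit (1 - p.1) ∧ IsUnit (1 - p.2.1) ∧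
      IsUnit (1 - p.2.2) ∧
      (-(p.1 * p.2.1 * p.2.2 * x) = (1 - p.1) * ((1 - p.2.1) * (1 - p.2.2))) with hQdef
  have hGvan : ∀ r ∈ (univ : Finset (ZMod q × ZMod q)), G r ≠ 0 → P r := by
    intro r _ hne
    by_contra hP
    apply hne
    rcases (by tauto : ¬ IsUnit r.1 ∨ ¬ IsUnit (1 - r.1) ∨ ¬ IsUnit r.2 ∨ ¬ IsUnit (1 - r.2)
        ∨ ¬ IsUnit (r.1 - x * r.2)) with h | h | h | h | h <;>
      simp [hGdef, MulChar.map_nonunit _ h]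
  have hFvan : ∀ p ∈ (univ : Finset (ZMod q × ZMod q × ZMod q)), F p ≠ 0 → Q p := by
    intro p _ hne
    by_contra hQ'
    apply hne
    by_cases heq : -(p.1 * p.2.1 * p.2.2 * x) = (1 - p.1) * ((1 - p.2.1) * (1 - p.2.2))
    · rcases (by tauto : ¬ IsUnit p.1 ∨ ¬ IsUnit p.2.1 ∨ ¬ IsUnit p.2.2 ∨ ¬ IsUnit (1 - p.1)
          ∨ ¬ IsUnit (1 - p.2.1) ∨ ¬ IsUnit (1 - p.2.2)) with h | h | h | h | h | h
      · simp [hFdef, MulChar.map_nonunit _ h]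
      · simp [hFdef, MulChar.map_nonunit _ h]
      · simp [hFdef, MulChar.map_nonunit _ h]
      · have hb : ¬ IsUnit ((1 - p.1) * ((1 - p.2.1) * (1 - p.2.2))) :=
          fun hu => h (isUnit_of_mul_isUnit_left hu)
        simp only [hFdef]
        rw [if_neg (fun hcond => hb hcond.2), mul_zero]
      · simp [hFdef, MulChar.map_nonunit _ h]
      · simp [hFdef, MulChar.map_nonunit _ h]
    · simp only [hFdef]
      rw [if_neg (fun hcond => heq hcond.1), mul_zero]
  have hfilG : ∑ r ∈ univ.filter P, G r = ∑ r : ZMod q × ZMod q, G r :=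
    Finset.sum_filter_of_ne hGvan
  have hfilF : ∑ p ∈ univ.filter Q, F p = ∑ p : ZMod q × ZMod q × ZMod q, F p :=
    Finset.sum_filter_of_ne hFvan
  rw [← hfilG, ← hfilF]
  set i : ZMod q × ZMod q → ZMod q × ZMod q × ZMod q := fun r =>
    (r.1 * (r.1 - x * r.2)⁻¹, (1 - (1 - r.2)⁻¹, (1 - r.1)⁻¹)) with hidef
  set j : ZMod q × ZMod q × ZMod q → ZMod q × ZMod q := fun p =>
    (1 - p.2.2⁻¹, 1 - (1 - p.2.1)⁻¹) with hjdef
  have hmem_i : ∀ r ∈ univ.filter P, i r ∈ univ.filter Q := by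
    intro r hr
    rw [Finset.mem_filter] at hr ⊢
    obtain ⟨-, hy, hry, hz, hsz, ht⟩ := hr
    refine ⟨Finset.mem_univ _, ?_⟩
    obtain ⟨y, z⟩ := r
    simp only at hy hry hz hsz ht
    have eb : (1 : ZMod q) - y * (y - x * z)⁻¹ = -(x * z) * (y - x * z)⁻¹ := by
      linear_combination -(ZMod.mul_inv_of_unit (y - x * z) ht)
    have ed : (1 : ZMod q) - (1 - z)⁻¹ = (-1) * (z * (1 - z)⁻¹) := by
      linear_combination -(ZMod.mul_inv_of_unit (1 - z) hsz)
    have ef : (1 : ZMod q) - (1 - y)⁻¹ = (-1) * (y * (1 - y)⁻¹) := by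
      linear_combination -(ZMod.mul_inv_of_unit (1 - y) hry)
    refine ⟨hy.mul (zinv_unit ht), ?_, zinv_unit hry, ?_, ?_, ?_, ?_⟩
    · simp only [hidef]
      rw [ed, neg_one_mul]
      exact (hz.mul (zinv_unit hsz)).neg
    · simp only [hidef]
      rw [eb]
      exact ((hx.mul hz).neg).mul (zinv_unit ht)
    · simp only [hidef]
      rw [sub_sub_cancel]
      exact zinv_unit hsz
    · simp only [hidef]
      rw [ef, neg_one_mul]
      exact (hy.mul (zinv_unit hry)).neg
    · simp only [hidef]
      rw [sub_sub_cancel, eb, ed, ef]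
      ring
  have hmem_j : ∀ p ∈ univ.filter Q, j p ∈ univ.filter P := by
    intro p hp
    rw [Finset.mem_filter] at hp ⊢
    obtain ⟨-, hu, hv, hw, hru, hrv, hrw, hc⟩ := hp
    refine ⟨Finset.mem_univ _, ?_⟩
    obtain ⟨u, v, w⟩ := p
    simp only at hu hv hw hru hrv hrw hc
    have ea : (1 : ZMod q) - w⁻¹ = -(1 - w) * w⁻¹ := by
      linear_combination -(ZMod.mul_inv_of_unit w hw)
    have ec : (1 : ZMod q) - (1 - v)⁻¹ = (-v) * (1 - v)⁻¹ := by
      linear_combination -(ZMod.mul_inv_of_unit (1 - v) hrv)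
    have key : ((1 - w⁻¹) - x * (1 - (1 - v)⁻¹)) * (u * (w * (1 - v)))
        = -((1 - v) * (1 - w)) := by
      linear_combination (-(u * (1 - v))) * (ZMod.mul_inv_of_unit w hw)
        + (x * u * w) * (ZMod.mul_inv_of_unit (1 - v) hrv) - hc
    refine ⟨?_, ?_, ?_, ?_, ?_⟩
    · simp only [hjdef]
      rw [ea]
      exact hrw.neg.mul (zinv_unit hw)
    · simp only [hjdef]
      rw [sub_sub_cancel]
      exact zinv_unit hw
    · simp only [hjdef]
      rw [ec]
      exact hv.neg.mul (zinv_unit hrv)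
    · simp only [hjdef]
      rw [sub_sub_cancel]
      exact zinv_unit hrv
    · simp only [hjdef]
      have hunit : IsUnit (((1 - w⁻¹) - x * (1 - (1 - v)⁻¹)) * (u * (w * (1 - v)))) := by
        rw [key]
        exact (hrv.mul hrw).neg
      exact isUnit_of_mul_isUnit_left hunit
  have hji : ∀ r ∈ univ.filter P, j (i r) = r := by
    intro r hr
    rw [Finset.mem_filter] at hr
    obtain ⟨-, hy, hry, hz, hsz, ht⟩ := hr
    obtain ⟨y, z⟩ := r
    simp only at hy hry hz hsz ht
    simp only [hidef, hjdef]
    refine Prod.ext ?_ ?_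
    · show 1 - ((1 - y)⁻¹)⁻¹ = y
      rw [zinv_inv hry, sub_sub_cancel]
    · show 1 - (1 - (1 - (1 - z)⁻¹))⁻¹ = z
      rw [sub_sub_cancel, zinv_inv hsz, sub_sub_cancel]
  have hij : ∀ p ∈ univ.filter Q, i (j p) = p := by
    intro p hp
    rw [Finset.mem_filter] at hp
    obtain ⟨-, hu, hv, hw, hru, hrv, hrw, hc⟩ := hp
    obtain ⟨u, v, w⟩ := p
    simp only at hu hv hw hru hrv hrw hc
    simp only [hidef, hjdef]
    have key : ((1 - w⁻¹) - x * (1 - (1 - v)⁻¹)) * (u * (w * (1 - v)))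
        = -((1 - v) * (1 - w)) := by
      linear_combination (-(u * (1 - v))) * (ZMod.mul_inv_of_unit w hw)
        + (x * u * w) * (ZMod.mul_inv_of_unit (1 - v) hrv) - hc
    have hT : IsUnit ((1 - w⁻¹) - x * (1 - (1 - v)⁻¹)) := by
      have hunit : IsUnit (((1 - w⁻¹) - x * (1 - (1 - v)⁻¹)) * (u * (w * (1 - v)))) := by
        rw [key]
        exact (hrv.mul hrw).neg
      exact isUnit_of_mul_isUnit_left hunit
    refine Prod.ext ?_ (Prod.ext ?_ ?_)
    · show (1 - w⁻¹) * ((1 - w⁻¹) - x * (1 - (1 - v)⁻¹))⁻¹ = u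
      have h2 : (1 - w⁻¹) = u * ((1 - w⁻¹) - x * (1 - (1 - v)⁻¹)) := by
        have hM : IsUnit (w * (1 - v)) := hw.mul hrv
        refine hM.mul_right_cancel ?_
        linear_combination (-(1 - v) + u * (1 - v)) * (ZMod.mul_inv_of_unit w hw)
          + (-(u * x * w)) * (ZMod.mul_inv_of_unit (1 - v) hrv) + hc
      refine hT.mul_right_cancel ?_
      rw [mul_assoc, ZMod.inv_mul_of_unit _ hT, mul_one]
      exact h2
    · show 1 - (1 - (1 - (1 - v)⁻¹))⁻¹ = v
      rw [sub_sub_cancel, zinv_inv hrv, sub_sub_cancel]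
    · show (1 - (1 - w⁻¹))⁻¹ = w
      rw [sub_sub_cancel, zinv_inv hw]
  have hweight : ∀ r ∈ univ.filter P, G r = F (i r) := by
    intro r hr
    have hmem := hmem_i r hr
    rw [Finset.mem_filter] at hr hmem
    obtain ⟨-, hy, hry, hz, hsz, ht⟩ := hr
    obtain ⟨-, hQmem⟩ := hmem
    obtain ⟨y, z⟩ := r
    simp only at hy hry hz hsz ht
    simp only [hidef, hGdef, hFdef, hQdef] at hQmem ⊢
    obtain ⟨h1, h2, h3, h4, h5, h6, h7⟩ := hQmem
    rw [if_pos ⟨h7, h4.mul (h5.mul h6)⟩, mul_one]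
    have ed : (1 : ZMod q) - (1 - z)⁻¹ = (-1) * (z * (1 - z)⁻¹) := by
      linear_combination -(ZMod.mul_inv_of_unit (1 - z) hsz)
    have ef : (1 : ZMod q) - (1 - y)⁻¹ = (-1) * (y * (1 - y)⁻¹) := by
      linear_combination -(ZMod.mul_inv_of_unit (1 - y) hry)
    rw [sub_sub_cancel, ed, ef]
    rw [map_mul A, apply_inv A ht]
    rw [map_mul B, map_mul B, apply_inv B hsz]
    rw [apply_inv C hry]
    rw [conj_apply_inv D hsz]
    rw [map_mul (conjChar E), map_mul (conjChar E), conj_apply_inv E hry, conj_neg_one E]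
    simp only [mul_apply']
    ring
  exact Finset.sum_nbij' i j hmem_i hmem_j hji hij hweight

end Main

theorem threeF₂_double_sum' (p α : ℕ) (hp : p.Prime) (hodd : Odd p) (hα : 1 ≤ α)
    (q : ℕ) (hq : q = p ^ α) [NeZero q] (A B C D E : DirichletCharacter ℂ q) :
    ∀ x : ZMod q,
      threeF₂ A B C D E x =
        ((1 : DirichletCharacter ℂ q) x * (B * D) (-1) / (q : ℂ) ^ 2) *
          ∑ y : ZMod q, ∑ z : ZMod q,
            (A * conjChar E) y * (conjChar C * E) (1 - y) * B z * (conjChar B * D) (1 - z) *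
              conjChar A (y - x * z) := by
  intro x
  by_cases hx : IsUnit x
  · rw [stage1, ← bij A B C D E x hx]
    have hone : (1 : DirichletCharacter ℂ q) x = 1 := by
      rcases hx with ⟨xu, rfl⟩
      exact MulChar.one_apply_coe xu
    have hE2 : E (-1) * E (-1) = 1 := by rw [← map_mul]; norm_num
    rw [hone, mul_apply' B D]
    simp only [← Finset.mul_sum]
    set S := ∑ y : ZMod q, ∑ z : ZMod q,
        (A * conjChar E) y * (conjChar C * E) (1 - y) * B z * (conjChar B * D) (1 - z) *
          conjChar A (y - x * z) with hS
    linear_combination (D (-1) * B (-1) / (q : ℂ) ^ 2 * S) * hE2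
  · have hone : (1 : DirichletCharacter ℂ q) x = 0 := MulChar.map_nonunit _ hx
    rw [stage1, hone]
    have hzero : ∀ u v w : ZMod q,
        (A u * B v * C w * conjChar D (1 - v) * conjChar E (1 - w)) *
          (if -(u * v * w * x) = (1 - u) * ((1 - v) * (1 - w)) ∧
              IsUnit ((1 - u) * ((1 - v) * (1 - w))) then (1:ℂ) else 0) = 0 := by
      intro u v w
      rw [if_neg, mul_zero]
      rintro ⟨heq, hun⟩
      rw [← heq] at hun
      have h1 : IsUnit (u * v * w * x) := by
        have := hun.neg
        rwa [neg_neg] at this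
      exact hx (isUnit_of_mul_isUnit_right h1)
    simp only [hzero, Finset.sum_const_zero, mul_zero, zero_mul, zero_div]
end
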